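/- For real q with 0 ≤ q < 1, the series ∑_{n=0}^∞ (-1)^n q^{n(n+1)/2} equals 1 + ∑_{n=1}^∞ (-1)^n q^n · ∏_{k=1}^{n} (1+q^{2k-1})/(1+q^{2k}). -/

import Mathlib

open Finset Filter

noncomputable def RFc (q x : ℝ) (n : ℕ) : ℝ :=
  ∏ k ∈ Finset.range n, (1 - x * q ^ (2 * k + 1)) / (1 - x * q ^ (2 * k + 2))

noncomputable def RFS (q x t : ℝ) : ℝ := ∑' n : ℕ, RFc q x n * t ^ n

noncomputable def RFL (q x : ℝ) : ℝ := ∑' n : ℕ, x ^ n * q ^ (n * (n + 1) / 2)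

section lemmas
variable {q x t : ℝ}

lemma den_pos (hq0 : 0 ≤ q) (hx0 : x ≤ 0) (m : ℕ) : 0 < 1 - x * q ^ m := by
  have : x * q ^ m ≤ 0 := mul_nonpos_of_nonpos_of_nonneg hx0 (pow_nonneg hq0 m)
  linarith

lemma RFc_nonneg (hq0 : 0 ≤ q) (hx0 : x ≤ 0) (n : ℕ) : 0 ≤ RFc q x n :=
  Finset.prod_nonneg fun _ _ => div_nonneg (den_pos hq0 hx0 _).le (den_pos hq0 hx0 _).le

lemma telescope (hq0 : 0 ≤ q) (hx0 : x ≤ 0) (n : ℕ) :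
    ∏ k ∈ Finset.range n, (1 - x * q ^ (2 * k)) / (1 - x * q ^ (2 * k + 2))
      = (1 - x) / (1 - x * q ^ (2 * n)) := by
  induction n with
  | zero =>
      have h0 : (1 - x * q ^ (2 * 0)) ≠ 0 := (den_pos hq0 hx0 _).ne'
      simp only [Finset.range_zero, Finset.prod_empty]
      rw [eq_div_iff h0]
      norm_num
  | succ n ih =>
      rw [Finset.prod_range_succ, ih]
      have h1 : (1 - x * q ^ (2 * n)) ≠ 0 := (den_pos hq0 hx0 _).ne'
      have h2 : (1 - x * q ^ (2 * n + 2)) ≠ 0 := (den_pos hq0 hx0 _).ne'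
      have h3 : (1 - x * q ^ (2 * (n + 1))) ≠ 0 := (den_pos hq0 hx0 _).ne'
      have he : 2 * (n + 1) = 2 * n + 2 := by ring
      rw [he] at h3 ⊢
      field_simp

lemma RFc_le (hq0 : 0 ≤ q) (hq1 : q < 1) (hx0 : x ≤ 0) (n : ℕ) :
    RFc q x n ≤ 1 - x := by
  have h1 : RFc q x n ≤ ∏ k ∈ Finset.range n, (1 - x * q ^ (2 * k)) / (1 - x * q ^ (2 * k + 2)) := by
    apply Finset.prod_le_prod
    · intro k _; exact div_nonneg (den_pos hq0 hx0 _).le (den_pos hq0 hx0 _).le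
    · intro k _
      have hpow : q ^ (2 * k + 1) ≤ q ^ (2 * k) :=
        pow_le_pow_of_le_one hq0 hq1.le (by omega)
      have hnum : 1 - x * q ^ (2 * k + 1) ≤ 1 - x * q ^ (2 * k) := by
        nlinarith [mul_le_mul_of_nonpos_left hpow hx0]
      gcongr
      exact (den_pos hq0 hx0 (2 * k + 2)).le
  have h2 : (1 - x) / (1 - x * q ^ (2 * n)) ≤ 1 - x := by
    apply div_le_self (by linarith)
    have : x * q ^ (2 * n) ≤ 0 := mul_nonpos_of_nonpos_of_nonneg hx0 (pow_nonneg hq0 _)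
    linarith
  calc RFc q x n ≤ _ := h1
    _ = (1 - x) / (1 - x * q ^ (2 * n)) := telescope hq0 hx0 n
    _ ≤ 1 - x := h2

lemma summable_RFS (hq0 : 0 ≤ q) (hq1 : q < 1) (hx0 : x ≤ 0) (ht : |t| < 1) :
    Summable fun n : ℕ => RFc q x n * t ^ n := by
  apply Summable.of_norm_bounded (g := fun n => (1 - x) * |t| ^ n)
    (((summable_geometric_of_lt_one (abs_nonneg t) ht)).mul_left _)
  intro n
  rw [norm_mul, norm_pow, Real.norm_eq_abs, Real.norm_eq_abs,
    abs_of_nonneg (RFc_nonneg hq0 hx0 n)]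
  exact mul_le_mul_of_nonneg_right (RFc_le hq0 hq1 hx0 n) (pow_nonneg (abs_nonneg t) n)


lemma RFc_key (hq0 : 0 ≤ q) (hx0 : x ≤ 0) (n : ℕ) :
    RFc q x (n + 1) * (1 - x * q ^ (2 * n + 2)) = RFc q x n * (1 - x * q ^ (2 * n + 1)) := by
  have h2 : (1 - x * q ^ (2 * n + 2)) ≠ 0 := (den_pos hq0 hx0 _).ne'
  rw [RFc, Finset.prod_range_succ, ← RFc]
  field_simp

lemma RFc_shift (hq0 : 0 ≤ q) (hx0 : x ≤ 0) (n : ℕ) :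
    RFc q x (n + 1) = (1 - x * q) / (1 - x * q ^ 2) * RFc q (x * q ^ 2) n := by
  rw [RFc, Finset.prod_range_succ']
  have h : ∀ k : ℕ, (1 - x * q ^ (2 * (k + 1) + 1)) / (1 - x * q ^ (2 * (k + 1) + 2))
      = (1 - x * q ^ 2 * q ^ (2 * k + 1)) / (1 - x * q ^ 2 * q ^ (2 * k + 2)) := by
    intro k
    rw [show 2 * (k + 1) + 1 = (2 * k + 1) + 2 by ring, show 2 * (k + 1) + 2 = (2 * k + 2) + 2 by ring,
      pow_add, pow_add]
    ring_nf
  rw [Finset.prod_congr rfl fun k _ => h k, ← RFc]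
  norm_num
  ring

set_option maxHeartbeats 1000000 in
lemma fe_t (hq0 : 0 ≤ q) (hq1 : q < 1) (hx0 : x ≤ 0) (ht : |t| < 1) :
    (1 - t) * RFS q x t = (1 - x) + x * (1 - t * q) * RFS q x (t * q ^ 2) := by
  have ht2 : |t * q ^ 2| < 1 := by
    rw [abs_mul, abs_pow, abs_of_nonneg hq0]
    calc |t| * q ^ 2 ≤ |t| * 1 := by
          apply mul_le_mul_of_nonneg_left ?_ (abs_nonneg t)
          nlinarith
      _ < 1 := by rwa [mul_one]
  have hf : Summable fun n : ℕ => RFc q x n * t ^ n := summable_RFS hq0 hq1 hx0 ht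
  have hg : Summable fun n : ℕ => RFc q x n * (t * q ^ 2) ^ n := summable_RFS hq0 hq1 hx0 ht2
  have hf1 : Summable fun n : ℕ => RFc q x (n + 1) * t ^ (n + 1) :=
    (summable_nat_add_iff 1).2 hf
  have hg1 : Summable fun n : ℕ => RFc q x (n + 1) * (t * q ^ 2) ^ (n + 1) :=
    (summable_nat_add_iff 1).2 hg
  have hft : Summable fun n : ℕ => RFc q x n * t ^ (n + 1) :=
    (hf.mul_right t).congr fun n => by ring
  have hgt : Summable fun n : ℕ => x * t * q * (RFc q x n * (t * q ^ 2) ^ n) :=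
    hg.mul_left _
  have hgx : Summable fun n : ℕ => x * (RFc q x (n + 1) * (t * q ^ 2) ^ (n + 1)) :=
    hg1.mul_left _
  have e1 : RFS q x t = 1 + ∑' n : ℕ, RFc q x (n + 1) * t ^ (n + 1) := by
    rw [RFS, Summable.tsum_eq_zero_add hf]
    simp [RFc]
  have e2 : t * RFS q x t = ∑' n : ℕ, RFc q x n * t ^ (n + 1) := by
    rw [RFS, ← tsum_mul_left]
    exact tsum_congr fun n => by ring
  have e3 : RFS q x (t * q ^ 2) = 1 + ∑' n : ℕ, RFc q x (n + 1) * (t * q ^ 2) ^ (n + 1) := by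
    rw [RFS, Summable.tsum_eq_zero_add hg]
    simp [RFc]
  have e4 : x * t * q * RFS q x (t * q ^ 2)
      = ∑' n : ℕ, x * t * q * (RFc q x n * (t * q ^ 2) ^ n) := by
    rw [RFS, ← tsum_mul_left]
  have key : ∀ n : ℕ, RFc q x (n + 1) * t ^ (n + 1) - RFc q x n * t ^ (n + 1)
      = x * (RFc q x (n + 1) * (t * q ^ 2) ^ (n + 1)) - x * t * q * (RFc q x n * (t * q ^ 2) ^ n) := by
    intro n
    have hk := RFc_key hq0 hx0 n
    linear_combination t ^ (n + 1) * hk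
  calc (1 - t) * RFS q x t = (1 + ∑' n : ℕ, RFc q x (n + 1) * t ^ (n + 1))
        - ∑' n : ℕ, RFc q x n * t ^ (n + 1) := by
        rw [sub_mul, one_mul, e2, e1]
    _ = 1 + ∑' n : ℕ, (RFc q x (n + 1) * t ^ (n + 1) - RFc q x n * t ^ (n + 1)) := by
        rw [Summable.tsum_sub hf1 hft]; ring
    _ = 1 + ∑' n : ℕ, (x * (RFc q x (n + 1) * (t * q ^ 2) ^ (n + 1))
          - x * t * q * (RFc q x n * (t * q ^ 2) ^ n)) := by
        rw [tsum_congr key]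
    _ = 1 + (∑' n : ℕ, x * (RFc q x (n + 1) * (t * q ^ 2) ^ (n + 1))
          - ∑' n : ℕ, x * t * q * (RFc q x n * (t * q ^ 2) ^ n)) := by
        rw [Summable.tsum_sub hgx hgt]
    _ = (1 - x) + x * (1 - t * q) * RFS q x (t * q ^ 2) := by
        rw [tsum_mul_left, ← e4, e3]
        ring

lemma fe_y (hq0 : 0 ≤ q) (hq1 : q < 1) (hx0 : x ≤ 0) (ht : |t| < 1) :
    RFS q x t = 1 + t * ((1 - x * q) / (1 - x * q ^ 2)) * RFS q (x * q ^ 2) t := by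
  have hx0' : x * q ^ 2 ≤ 0 := mul_nonpos_of_nonpos_of_nonneg hx0 (pow_nonneg hq0 _)
  have hf : Summable fun n : ℕ => RFc q x n * t ^ n := summable_RFS hq0 hq1 hx0 ht
  rw [RFS, Summable.tsum_eq_zero_add hf]
  have : ∀ n : ℕ, RFc q x (n + 1) * t ^ (n + 1)
      = (t * ((1 - x * q) / (1 - x * q ^ 2))) * (RFc q (x * q ^ 2) n * t ^ n) := by
    intro n
    rw [RFc_shift hq0 hx0 n]
    ring
  rw [tsum_congr this, tsum_mul_left, ← RFS]
  simp [RFc]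

lemma abs_xq_lt (hq1 : q < 1) (hq0 : 0 ≤ q) (hx1 : -1 ≤ x) (hx0 : x ≤ 0) : |x * q| < 1 := by
  rw [abs_mul, abs_of_nonneg hq0]
  have h1 : |x| ≤ 1 := abs_le.mpr ⟨hx1, by linarith⟩
  nlinarith [abs_nonneg x]

lemma fe_W (hq0 : 0 ≤ q) (hq1 : q < 1) (hx1 : -1 ≤ x) (hx0 : x ≤ 0) :
    RFS q x (x * q) = 1 + x * q + x ^ 2 * q ^ 3 * RFS q (x * q ^ 2) (x * q ^ 2 * q) := by
  have htxq : |x * q| < 1 := abs_xq_lt hq1 hq0 hx1 hx0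
  have hx0' : x * q ^ 2 ≤ 0 := mul_nonpos_of_nonpos_of_nonneg hx0 (pow_nonneg hq0 _)
  have hne : (1 : ℝ) - x * q ^ 2 ≠ 0 := (den_pos hq0 hx0 2).ne'
  have step1 : (1 - x * q ^ 2) * (RFS q x (x * q) - 1)
      = x * q * (1 - x * q) * RFS q (x * q ^ 2) (x * q) := by
    rw [fe_y hq0 hq1 hx0 htxq]
    field_simp
    ring
  have step2 : (1 - x * q) * RFS q (x * q ^ 2) (x * q)
      = (1 - x * q ^ 2) + x * q ^ 2 * (1 - x * q * q) * RFS q (x * q ^ 2) (x * q * q ^ 2) :=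
    fe_t hq0 hq1 hx0' htxq
  have harg : x * q * q ^ 2 = x * q ^ 2 * q := by ring
  rw [harg] at step2
  have h : (1 - x * q ^ 2) *
      (RFS q x (x * q) - (1 + x * q + x ^ 2 * q ^ 3 * RFS q (x * q ^ 2) (x * q ^ 2 * q))) = 0 := by
    linear_combination step1 + x * q * step2
  rcases mul_eq_zero.mp h with h' | h'
  · exact absurd h' hne
  · linarith

lemma tri_ge (n : ℕ) : n ≤ n * (n + 1) / 2 := by
  rcases n with _ | m
  · simp
  · have h : (m + 1) * 2 ≤ (m + 1) * (m + 1 + 1) := Nat.mul_le_mul (le_refl _) (by omega)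
    exact (Nat.le_div_iff_mul_le two_pos).mpr h

lemma summable_RFL (hq0 : 0 ≤ q) (hq1 : q < 1) (hx : |x| ≤ 1) :
    Summable fun n : ℕ => x ^ n * q ^ (n * (n + 1) / 2) := by
  apply Summable.of_norm_bounded (g := fun n => q ^ n) (summable_geometric_of_lt_one hq0 hq1)
  intro n
  rw [norm_mul, norm_pow, norm_pow, Real.norm_eq_abs, Real.norm_eq_abs, abs_of_nonneg hq0]
  calc |x| ^ n * q ^ (n * (n + 1) / 2) ≤ 1 * q ^ n := by
        apply mul_le_mul (pow_le_one₀ (abs_nonneg x) hx)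
          (pow_le_pow_of_le_one hq0 hq1.le (tri_ge n)) (pow_nonneg hq0 _) one_pos.le
    _ = q ^ n := one_mul _

lemma fe_L (hq0 : 0 ≤ q) (hq1 : q < 1) (hx : |x| ≤ 1) :
    RFL q x = 1 + x * q + x ^ 2 * q ^ 3 * RFL q (x * q ^ 2) := by
  have hf : Summable fun n : ℕ => x ^ n * q ^ (n * (n + 1) / 2) := summable_RFL hq0 hq1 hx
  have hf1 : Summable fun n : ℕ => x ^ (n + 1) * q ^ ((n + 1) * (n + 1 + 1) / 2) :=
    (summable_nat_add_iff 1).2 hf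
  rw [RFL, Summable.tsum_eq_zero_add hf, Summable.tsum_eq_zero_add hf1]
  have hterm : ∀ n : ℕ, x ^ (n + 1 + 1) * q ^ ((n + 1 + 1) * (n + 1 + 1 + 1) / 2)
      = x ^ 2 * q ^ 3 * ((x * q ^ 2) ^ n * q ^ (n * (n + 1) / 2)) := by
    intro n
    have he : (n + 1 + 1) * (n + 1 + 1 + 1) / 2 = 2 * n + 3 + n * (n + 1) / 2 := by
      have h1 : (n + 1 + 1) * (n + 1 + 1 + 1) = 2 * (2 * n + 3) + n * (n + 1) := by ring
      rw [h1, Nat.mul_add_div two_pos]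
    rw [he, pow_add]
    ring
  rw [tsum_congr hterm, tsum_mul_left, ← RFL]
  norm_num
  ring

lemma abs_RFS_le (hq0 : 0 ≤ q) (hq1 : q < 1) (hx1 : -1 ≤ x) (hx0 : x ≤ 0)
    (ht : |t| ≤ q) : |RFS q x t| ≤ 2 * (1 - q)⁻¹ := by
  have htlt : |t| < 1 := lt_of_le_of_lt ht hq1
  have hf := summable_RFS hq0 hq1 hx0 htlt
  have hb : ∀ n : ℕ, ‖RFc q x n * t ^ n‖ ≤ 2 * q ^ n := by
    intro n
    rw [norm_mul, norm_pow, Real.norm_eq_abs, Real.norm_eq_abs,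
      abs_of_nonneg (RFc_nonneg hq0 hx0 n)]
    have h1 : RFc q x n ≤ 2 := (RFc_le hq0 hq1 hx0 n).trans (by linarith)
    have h2 : |t| ^ n ≤ q ^ n := pow_le_pow_left₀ (abs_nonneg t) ht n
    have h3 : (0:ℝ) ≤ |t| ^ n := pow_nonneg (abs_nonneg t) n
    nlinarith [RFc_nonneg hq0 hx0 n]
  have hs2 : Summable fun n : ℕ => 2 * q ^ n :=
    (summable_geometric_of_lt_one hq0 hq1).mul_left 2
  have hnorm : Summable fun n : ℕ => ‖RFc q x n * t ^ n‖ :=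
    Summable.of_nonneg_of_le (fun n => norm_nonneg _) hb hs2
  calc |RFS q x t| ≤ ∑' n : ℕ, ‖RFc q x n * t ^ n‖ := by
        rw [← Real.norm_eq_abs]; exact norm_tsum_le_tsum_norm hnorm
    _ ≤ ∑' n : ℕ, 2 * q ^ n := Summable.tsum_le_tsum hb hnorm hs2
    _ = 2 * (1 - q)⁻¹ := by rw [tsum_mul_left, tsum_geometric_of_lt_one hq0 hq1]

lemma abs_RFL_le (hq0 : 0 ≤ q) (hq1 : q < 1) (hx : |x| ≤ 1) :
    |RFL q x| ≤ (1 - q)⁻¹ := by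
  have hf := summable_RFL hq0 hq1 hx
  have hb : ∀ n : ℕ, ‖x ^ n * q ^ (n * (n + 1) / 2)‖ ≤ q ^ n := by
    intro n
    rw [norm_mul, norm_pow, norm_pow, Real.norm_eq_abs, Real.norm_eq_abs, abs_of_nonneg hq0]
    calc |x| ^ n * q ^ (n * (n + 1) / 2) ≤ 1 * q ^ n := by
          apply mul_le_mul (pow_le_one₀ (abs_nonneg x) hx)
            (pow_le_pow_of_le_one hq0 hq1.le (tri_ge n)) (pow_nonneg hq0 _) one_pos.le
      _ = q ^ n := one_mul _
  have hs2 : Summable fun n : ℕ => q ^ n := summable_geometric_of_lt_one hq0 hq1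
  have hnorm : Summable fun n : ℕ => ‖x ^ n * q ^ (n * (n + 1) / 2)‖ :=
    Summable.of_nonneg_of_le (fun n => norm_nonneg _) hb hs2
  calc |RFL q x| ≤ ∑' n : ℕ, ‖x ^ n * q ^ (n * (n + 1) / 2)‖ := by
        rw [← Real.norm_eq_abs]; exact norm_tsum_le_tsum_norm hnorm
    _ ≤ ∑' n : ℕ, q ^ n := Summable.tsum_le_tsum hb hnorm hs2
    _ = (1 - q)⁻¹ := tsum_geometric_of_lt_one hq0 hq1

lemma L_eq_W (hq0 : 0 ≤ q) (hq1 : q < 1) : RFL q (-1) = RFS q (-1) (-1 * q) := by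
  have key : ∀ y : ℝ, -1 ≤ y → y ≤ 0 →
      RFL q y - RFS q y (y * q)
        = y ^ 2 * q ^ 3 * (RFL q (y * q ^ 2) - RFS q (y * q ^ 2) (y * q ^ 2 * q)) := by
    intro y h1 h0
    have hy : |y| ≤ 1 := abs_le.mpr ⟨h1, by linarith⟩
    rw [fe_L hq0 hq1 hy, fe_W hq0 hq1 h1 h0]
    ring
  have hq2 : (0:ℝ) < (1 - q)⁻¹ := inv_pos.mpr (by linarith)
  have bound : ∀ N : ℕ, ∀ y : ℝ, -1 ≤ y → y ≤ 0 →
      |RFL q y - RFS q y (y * q)| ≤ (q ^ 3) ^ N * (3 * (1 - q)⁻¹) := by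
    intro N
    induction N with
    | zero =>
        intro y h1 h0
        have hy : |y| ≤ 1 := abs_le.mpr ⟨h1, by linarith⟩
        have hL := abs_RFL_le hq0 hq1 hy
        have ht : |y * q| ≤ q := by
          rw [abs_mul, abs_of_nonneg hq0]
          nlinarith [abs_nonneg y]
        have hW := abs_RFS_le hq0 hq1 h1 h0 ht
        have htri : |RFL q y - RFS q y (y * q)| ≤ |RFL q y| + |RFS q y (y * q)| := abs_sub _ _
        rw [pow_zero, one_mul]
        linarith
    | succ N ih =>
        intro y h1 h0
        have hy1 : -1 ≤ y * q ^ 2 := by nlinarith [sq_nonneg q, pow_le_one₀ hq0 hq1.le (n := 2)]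
        have hy0 : y * q ^ 2 ≤ 0 := mul_nonpos_of_nonpos_of_nonneg h0 (pow_nonneg hq0 _)
        rw [key y h1 h0, abs_mul]
        have h2 : |y ^ 2 * q ^ 3| ≤ q ^ 3 := by
          have hy2 : y ^ 2 ≤ 1 := by nlinarith
          rw [abs_mul, abs_pow, abs_pow, abs_of_nonneg hq0, sq_abs]
          nlinarith [pow_nonneg hq0 3]
        calc |y ^ 2 * q ^ 3| * |RFL q (y * q ^ 2) - RFS q (y * q ^ 2) (y * q ^ 2 * q)|
            ≤ q ^ 3 * ((q ^ 3) ^ N * (3 * (1 - q)⁻¹)) := by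
              apply mul_le_mul h2 (ih _ hy1 hy0) (abs_nonneg _) (pow_nonneg hq0 3)
          _ = (q ^ 3) ^ (N + 1) * (3 * (1 - q)⁻¹) := by ring
  have h30 : (0:ℝ) ≤ q ^ 3 := pow_nonneg hq0 3
  have h31 : q ^ 3 < 1 := pow_lt_one₀ hq0 hq1 (by norm_num)
  have htend : Tendsto (fun N : ℕ => (q ^ 3) ^ N * (3 * (1 - q)⁻¹)) atTop (nhds 0) := by
    simpa using (tendsto_pow_atTop_nhds_zero_of_lt_one h30 h31).mul_const (3 * (1 - q)⁻¹)
  have habs : |RFL q (-1) - RFS q (-1) (-1 * q)| ≤ 0 :=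
    ge_of_tendsto' htend fun N => bound N (-1) le_rfl (by norm_num)
  have := abs_nonneg (RFL q (-1) - RFS q (-1) (-1 * q))
  have h0 : |RFL q (-1) - RFS q (-1) (-1 * q)| = 0 := le_antisymm habs this
  have := abs_eq_zero.mp h0
  linarith [sub_eq_zero.mp this]
end lemmas

theorem gauss_trigonal_rogers_fine (q : ℝ) (hq0 : 0 ≤ q) (hq1 : q < 1) :
    ∑' n : ℕ, (-1 : ℝ) ^ n * q ^ (n * (n + 1) / 2) =
      1 + ∑' n : ℕ, (-1 : ℝ) ^ (n + 1) * q ^ (n + 1) *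
        ∏ k ∈ Finset.range (n + 1), (1 + q ^ (2 * k + 1)) / (1 + q ^ (2 * k + 2)) := by
  have lhs_eq : ∑' n : ℕ, (-1 : ℝ) ^ n * q ^ (n * (n + 1) / 2) = RFL q (-1) := rfl
  rw [lhs_eq, L_eq_W hq0 hq1]
  have ht : |(-1 : ℝ) * q| < 1 := by
    rw [abs_mul, abs_neg, abs_one, one_mul, abs_of_nonneg hq0]; exact hq1
  have hf : Summable fun n : ℕ => RFc q (-1) n * ((-1) * q) ^ n :=
    summable_RFS hq0 hq1 (by norm_num) ht
  rw [RFS, Summable.tsum_eq_zero_add hf]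
  have h0 : RFc q (-1) 0 * ((-1 : ℝ) * q) ^ 0 = 1 := by simp [RFc]
  rw [h0]
  congr 1
  apply tsum_congr
  intro n
  rw [RFc]
  have hp : ∏ k ∈ Finset.range (n + 1), (1 - (-1 : ℝ) * q ^ (2 * k + 1)) / (1 - (-1) * q ^ (2 * k + 2))
      = ∏ k ∈ Finset.range (n + 1), (1 + q ^ (2 * k + 1)) / (1 + q ^ (2 * k + 2)) :=
    Finset.prod_congr rfl fun k _ => by ring_nf
  rw [hp, mul_pow]
  ring
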